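/- Let C_{Γ(LP2,2,1)} be the class of all finite Kripke models whose frame consists of a root x and finitely many (at least one) pairwise disjoint two-element sets C⁰,…,C^j not containing x, where the accessibility relation R is the reflexive relation with C^k×C^k ⊆ R for each k, x R y for every world y, and no other pairs (a root below finitely many clusters, each consisting of exactly two final worlds). Then C_{Γ(LP2,2,1)} enjoys 3-IP. -/

import Mathlib

/-- Modal formulas over countably many variables. -/
inductive ModalForm : Type where
  | var : ℕ → ModalForm
  | bot : ModalForm
  | and : ModalForm → ModalForm → ModalForm
  | or : ModalForm → ModalForm → ModalForm
  | not : ModalForm → ModalForm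
  | imp : ModalForm → ModalForm → ModalForm
  | box : ModalForm → ModalForm

namespace ModalForm

mutual
  /-- positively occurring variables -/
  def vpos : ModalForm → Finset ℕ
    | var p => {p}
    | bot => ∅
    | and φ ψ => vpos φ ∪ vpos ψ
    | or φ ψ => vpos φ ∪ vpos ψ
    | not φ => vneg φ
    | imp φ ψ => vneg φ ∪ vpos ψ
    | box φ => vpos φ
  /-- negatively occurring variables -/
  def vneg : ModalForm → Finset ℕ
    | var _ => ∅
    | bot => ∅
    | and φ ψ => vneg φ ∪ vneg ψ
    | or φ ψ => vneg φ ∪ vneg ψ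
    | not φ => vpos φ
    | imp φ ψ => vpos φ ∪ vneg ψ
    | box φ => vneg φ
end

/-- Modal depth: maximal nesting of `□`. -/
def depth : ModalForm → ℕ
  | var _ => 0
  | bot => 0
  | and φ ψ => max (depth φ) (depth ψ)
  | or φ ψ => max (depth φ) (depth ψ)
  | not φ => depth φ
  | imp φ ψ => max (depth φ) (depth ψ)
  | box φ => depth φ + 1

/-- `◇φ := ¬□¬φ` -/
def dia (φ : ModalForm) : ModalForm := not (box (not φ))

/-- `⊤ := ¬⊥` -/
def top : ModalForm := not bot

end ModalForm

/-- An S4 Kripke frame: nonempty set of worlds with a reflexive transitive relation. -/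
structure KFrame : Type 1 where
  W : Type
  R : W → W → Prop
  nonempty : Nonempty W
  refl : ∀ x, R x x
  trans : ∀ x y z, R x y → R y z → R x z

/-- A Kripke model: a frame with a valuation. -/
structure KModel : Type 1 extends KFrame where
  val : W → ℕ → Prop

/-- The model based on frame `F` with valuation `V`. -/
def KFrame.toModel (F : KFrame) (V : F.W → ℕ → Prop) : KModel :=
  { toKFrame := F, val := V }

/-- Satisfaction in a Kripke model. -/
def KModel.Sat (M : KModel) : M.W → ModalForm → Prop
  | w, .var p => M.val w p
  | _, .bot => False
  | w, .and φ ψ => M.Sat w φ ∧ M.Sat w ψ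
  | w, .or φ ψ => M.Sat w φ ∨ M.Sat w ψ
  | w, .not φ => ¬ M.Sat w φ
  | w, .imp φ ψ => M.Sat w φ → M.Sat w ψ
  | w, .box φ => ∀ y, M.R w y → M.Sat y φ

/-- `(M0,w0) →ₙ^{(P⁺,P⁻)} (M1,w1)`: every `(P⁺,P⁻)`-formula of depth ≤ n
satisfied at `(M0,w0)` is satisfied at `(M1,w1)`. -/
def ModalArrow (Pp Pm : Finset ℕ) (n : ℕ) (M0 : KModel) (w0 : M0.W)
    (M1 : KModel) (w1 : M1.W) : Prop :=
  ∀ φ : ModalForm, φ.vpos ⊆ Pp → φ.vneg ⊆ Pm → φ.depth ≤ n →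
    M0.Sat w0 φ → M1.Sat w1 φ

/-- p-morphism between frames. -/
def PMorphism (F G : KFrame) (f : F.W → G.W) : Prop :=
  (∀ x y, F.R x y → G.R (f x) (f y)) ∧
  (∀ x w, G.R (f x) w → ∃ z, F.R x z ∧ f z = w)

/-- The class `C` of Kripke models enjoys `n`-IP. -/
def EnjoysIP (C : Set KModel) (n : ℕ) : Prop :=
  ∀ (Pp Pm : Finset ℕ) (M0 M1 : KModel), M0 ∈ C → M1 ∈ C →
    ∀ (w0 : M0.W) (w1 : M1.W), ModalArrow Pp Pm n M0 w0 M1 w1 →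
      ∃ (F : KFrame) (wstar : F.W) (f0 : F.W → M0.W) (f1 : F.W → M1.W),
        (∀ V : F.W → ℕ → Prop, F.toModel V ∈ C) ∧
        PMorphism F M0.toKFrame f0 ∧
        PMorphism F M1.toKFrame f1 ∧
        f0 wstar = w0 ∧ f1 wstar = w1 ∧
        ∀ x : F.W, ModalArrow Pp Pm 0 M0 (f0 x) M1 (f1 x)

/-- A world is final iff every successor is also a predecessor. -/
def KModel.Final (M : KModel) (w : M.W) : Prop := ∀ y, M.R w y → M.R y w

/-- The cluster of a world. -/
def KModel.cluster (M : KModel) (w : M.W) : Set M.W := {u | M.R w u ∧ M.R u w}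

/-- Cluster `C0` of `M0` matches cluster `C1` of `M1`. -/
def Matches (Pp Pm : Finset ℕ) (M0 M1 : KModel) (C0 : Set M0.W) (C1 : Set M1.W) : Prop :=
  (∀ u0 ∈ C0, ∃ u1 ∈ C1, ModalArrow Pp Pm 0 M0 u0 M1 u1) ∧
  (∀ u1 ∈ C1, ∃ u0 ∈ C0, ModalArrow Pp Pm 0 M0 u0 M1 u1)

/-- `φ` is satisfied at every world of every model in `C`. -/
def ValidOn (C : Set KModel) (φ : ModalForm) : Prop :=
  ∀ M ∈ C, ∀ w : M.W, M.Sat w φ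

/-- A set with exactly two elements. -/
def TwoElem {α : Type} (C : Set α) : Prop := ∃ a b : α, a ≠ b ∧ C = {a, b}

/-- The class of Γ(LP₂,2,1) models: a root below finitely many (at least one)
clusters, each consisting of exactly two final worlds. -/
def C_LP221 : Set KModel :=
  {M | Finite M.W ∧ ∃ (x : M.W) (j : ℕ) (C : Fin (j + 1) → Set M.W),
    (∀ k, x ∉ C k) ∧ (∀ k, TwoElem (C k)) ∧
    (∀ k l, k ≠ l → Disjoint (C k) (C l)) ∧
    (∀ w : M.W, w = x ∨ ∃ k, w ∈ C k) ∧
    ∀ u v : M.W, M.R u v ↔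
      (u = v ∨ (∃ k, u ∈ C k ∧ v ∈ C k) ∨ u = x)}

namespace IPAux

open ModalForm

/-- conjunction of a list of formulas -/
def conjList : List ModalForm → ModalForm
  | [] => .not .bot
  | φ :: l => .and φ (conjList l)

lemma sat_conjList (M : KModel) (w : M.W) : ∀ l : List ModalForm,
    M.Sat w (conjList l) ↔ ∀ φ ∈ l, M.Sat w φ := by
  intro l
  induction l with
  | nil => simp [conjList, KModel.Sat]
  | cons φ l ih => simp [conjList, KModel.Sat, ih]

lemma vpos_conjList (X : Finset ℕ) : ∀ l : List ModalForm,
    (∀ φ ∈ l, φ.vpos ⊆ X) → (conjList l).vpos ⊆ X := by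
  intro l
  induction l with
  | nil => simp [conjList, ModalForm.vpos, ModalForm.vneg]
  | cons φ l ih =>
      intro h
      simp only [conjList, ModalForm.vpos, Finset.union_subset_iff]
      exact ⟨h φ (by simp), ih fun ψ hψ => h ψ (by simp [hψ])⟩

lemma vneg_conjList (X : Finset ℕ) : ∀ l : List ModalForm,
    (∀ φ ∈ l, φ.vneg ⊆ X) → (conjList l).vneg ⊆ X := by
  intro l
  induction l with
  | nil => simp [conjList, ModalForm.vneg, ModalForm.vpos]
  | cons φ l ih =>
      intro h
      simp only [conjList, ModalForm.vneg, Finset.union_subset_iff]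
      exact ⟨h φ (by simp), ih fun ψ hψ => h ψ (by simp [hψ])⟩

lemma depth_conjList : ∀ l : List ModalForm,
    (∀ φ ∈ l, φ.depth = 0) → (conjList l).depth = 0 := by
  intro l
  induction l with
  | nil => simp [conjList, ModalForm.depth]
  | cons φ l ih =>
      intro h
      simp only [conjList, ModalForm.depth, Nat.max_eq_zero_iff]
      exact ⟨h φ (by simp), ih fun ψ hψ => h ψ (by simp [hψ])⟩

/-- the depth-0 transfer condition between a world of `M` and a world of `N` -/
def Cond (Pp Pm : Finset ℕ) (M : KModel) (u : M.W) (N : KModel) (v : N.W) : Prop :=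
  (∀ p ∈ Pp, M.val u p → N.val v p) ∧ (∀ p ∈ Pm, N.val v p → M.val u p)

lemma cond_refl (Pp Pm : Finset ℕ) (M : KModel) (u : M.W) : Cond Pp Pm M u M u :=
  ⟨fun _ _ h => h, fun _ _ h => h⟩

lemma cond_swap (Pp Pm : Finset ℕ) (M N : KModel) (u : M.W) (v : N.W) :
    Cond Pm Pp N v M u ↔ Cond Pp Pm M u N v := by
  constructor <;> rintro ⟨h1, h2⟩ <;> exact ⟨h2, h1⟩

open Classical in
/-- characteristic depth-0 formula of a world -/
noncomputable def charForm (Pp Pm : Finset ℕ) (M : KModel) (u : M.W) : ModalForm :=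
  conjList ((Pp.toList.filter (fun p => M.val u p)).map .var
    ++ (Pm.toList.filter (fun p => ¬ M.val u p)).map (fun p => .not (.var p)))

lemma charForm_vpos (Pp Pm : Finset ℕ) (M : KModel) (u : M.W) :
    (charForm Pp Pm M u).vpos ⊆ Pp := by
  classical
  apply vpos_conjList
  intro φ hφ
  simp only [List.mem_append, List.mem_map, List.mem_filter, Finset.mem_toList] at hφ
  rcases hφ with ⟨p, ⟨hp, _⟩, rfl⟩ | ⟨p, ⟨hp, _⟩, rfl⟩
  · simp [ModalForm.vpos, hp]
  · simp [ModalForm.vpos, ModalForm.vneg]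

lemma charForm_vneg (Pp Pm : Finset ℕ) (M : KModel) (u : M.W) :
    (charForm Pp Pm M u).vneg ⊆ Pm := by
  classical
  apply vneg_conjList
  intro φ hφ
  simp only [List.mem_append, List.mem_map, List.mem_filter, Finset.mem_toList] at hφ
  rcases hφ with ⟨p, ⟨hp, _⟩, rfl⟩ | ⟨p, ⟨hp, _⟩, rfl⟩
  · simp [ModalForm.vneg]
  · simp [ModalForm.vneg, ModalForm.vpos, hp]

lemma charForm_depth (Pp Pm : Finset ℕ) (M : KModel) (u : M.W) :
    (charForm Pp Pm M u).depth = 0 := by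
  classical
  apply depth_conjList
  intro φ hφ
  simp only [List.mem_append, List.mem_map, List.mem_filter, Finset.mem_toList] at hφ
  rcases hφ with ⟨p, _, rfl⟩ | ⟨p, _, rfl⟩ <;> simp [ModalForm.depth]

lemma sat_charForm (Pp Pm : Finset ℕ) (M : KModel) (u : M.W) (N : KModel) (v : N.W) :
    N.Sat v (charForm Pp Pm M u) ↔ Cond Pp Pm M u N v := by
  classical
  rw [charForm, sat_conjList]
  constructor
  · intro h
    constructor
    · intro p hp hval
      have := h (.var p) (by
        simp only [List.mem_append, List.mem_map, List.mem_filter, Finset.mem_toList]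
        exact Or.inl ⟨p, ⟨hp, by simp [hval]⟩, rfl⟩)
      simpa [KModel.Sat] using this
    · intro p hp hval
      by_contra hn
      have := h (.not (.var p)) (by
        simp only [List.mem_append, List.mem_map, List.mem_filter, Finset.mem_toList]
        exact Or.inr ⟨p, ⟨hp, by simp [hn]⟩, rfl⟩)
      simp [KModel.Sat] at this
      exact this hval
  · rintro ⟨h1, h2⟩ φ hφ
    simp only [List.mem_append, List.mem_map, List.mem_filter, Finset.mem_toList] at hφ
    rcases hφ with ⟨p, ⟨hp, hv⟩, rfl⟩ | ⟨p, ⟨hp, hv⟩, rfl⟩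
    · have : M.val u p := by simpa using hv
      exact h1 p hp this
    · have hnv : ¬ M.val u p := by simpa using hv
      intro hc
      exact hnv (h2 p hp hc)

lemma charForm_self (Pp Pm : Finset ℕ) (M : KModel) (u : M.W) :
    M.Sat u (charForm Pp Pm M u) := by
  rw [sat_charForm]; exact cond_refl _ _ _ _

end IPAux
namespace IPAux

lemma prop_transfer (Pp Pm : Finset ℕ) (M N : KModel) (u : M.W) (v : N.W)
    (h : Cond Pp Pm M u N v) :
    ∀ φ : ModalForm, φ.depth = 0 →
      ((φ.vpos ⊆ Pp → φ.vneg ⊆ Pm → M.Sat u φ → N.Sat v φ) ∧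
       (φ.vpos ⊆ Pm → φ.vneg ⊆ Pp → N.Sat v φ → M.Sat u φ)) := by
  intro φ
  induction φ with
  | var p =>
      intro _
      simp only [ModalForm.vpos, ModalForm.vneg, Finset.singleton_subset_iff,
        Finset.empty_subset, KModel.Sat]
      exact ⟨fun hp _ => h.1 p hp, fun hp _ => h.2 p hp⟩
  | bot => intro _; simp [KModel.Sat]
  | and φ ψ ihφ ihψ =>
      intro hd
      simp only [ModalForm.depth, Nat.max_eq_zero_iff] at hd
      simp only [ModalForm.vpos, ModalForm.vneg, Finset.union_subset_iff, KModel.Sat]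
      obtain ⟨h1, h2⟩ := ihφ hd.1
      obtain ⟨h3, h4⟩ := ihψ hd.2
      exact ⟨fun hp hn hs => ⟨h1 hp.1 hn.1 hs.1, h3 hp.2 hn.2 hs.2⟩,
             fun hp hn hs => ⟨h2 hp.1 hn.1 hs.1, h4 hp.2 hn.2 hs.2⟩⟩
  | or φ ψ ihφ ihψ =>
      intro hd
      simp only [ModalForm.depth, Nat.max_eq_zero_iff] at hd
      simp only [ModalForm.vpos, ModalForm.vneg, Finset.union_subset_iff, KModel.Sat]
      obtain ⟨h1, h2⟩ := ihφ hd.1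
      obtain ⟨h3, h4⟩ := ihψ hd.2
      exact ⟨fun hp hn hs => hs.elim (fun hs => Or.inl (h1 hp.1 hn.1 hs))
               (fun hs => Or.inr (h3 hp.2 hn.2 hs)),
             fun hp hn hs => hs.elim (fun hs => Or.inl (h2 hp.1 hn.1 hs))
               (fun hs => Or.inr (h4 hp.2 hn.2 hs))⟩
  | not φ ihφ =>
      intro hd
      simp only [ModalForm.depth] at hd
      simp only [ModalForm.vpos, ModalForm.vneg, KModel.Sat]
      obtain ⟨h1, h2⟩ := ihφ hd
      exact ⟨fun hp hn hs hc => hs (h2 hn hp hc), fun hp hn hs hc => hs (h1 hn hp hc)⟩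
  | imp φ ψ ihφ ihψ =>
      intro hd
      simp only [ModalForm.depth, Nat.max_eq_zero_iff] at hd
      simp only [ModalForm.vpos, ModalForm.vneg, Finset.union_subset_iff, KModel.Sat]
      obtain ⟨h1, h2⟩ := ihφ hd.1
      obtain ⟨h3, h4⟩ := ihψ hd.2
      exact ⟨fun hp hn hs hc => h3 hp.2 hn.2 (hs (h2 hn.1 hp.1 hc)),
             fun hp hn hs hc => h4 hp.2 hn.2 (hs (h1 hn.1 hp.1 hc))⟩
  | box φ _ =>
      intro hd
      simp [ModalForm.depth] at hd

lemma arrow0_iff (Pp Pm : Finset ℕ) (M N : KModel) (u : M.W) (v : N.W) :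
    ModalArrow Pp Pm 0 M u N v ↔ Cond Pp Pm M u N v := by
  constructor
  · intro h
    constructor
    · intro p hp hval
      have := h (.var p) (by simp [ModalForm.vpos, hp]) (by simp [ModalForm.vneg])
        (by simp [ModalForm.depth]) (by simpa [KModel.Sat] using hval)
      simpa [KModel.Sat] using this
    · intro p hp hval
      by_contra hn
      have := h (.not (.var p)) (by simp [ModalForm.vpos, ModalForm.vneg])
        (by simp [ModalForm.vneg, ModalForm.vpos, hp]) (by simp [ModalForm.depth])
        (by simpa [KModel.Sat] using hn)
      simp [KModel.Sat] at this
      exact this hval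
  · intro h φ hp hn hd hs
    exact (prop_transfer Pp Pm M N u v h φ (Nat.le_zero.mp hd)).1 hp hn hs

lemma sat_dia (M : KModel) (w : M.W) (φ : ModalForm) :
    M.Sat w (ModalForm.dia φ) ↔ ∃ y, M.R w y ∧ M.Sat y φ := by
  simp only [ModalForm.dia, KModel.Sat]
  constructor
  · intro h
    by_contra hn
    push_neg at hn
    exact h fun y hy => hn y hy
  · rintro ⟨y, hy, hs⟩ h
    exact h y hy hs

lemma dia_vpos (φ : ModalForm) : (ModalForm.dia φ).vpos = φ.vpos := by
  simp [ModalForm.dia, ModalForm.vpos, ModalForm.vneg]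

lemma dia_vneg (φ : ModalForm) : (ModalForm.dia φ).vneg = φ.vneg := by
  simp [ModalForm.dia, ModalForm.vpos, ModalForm.vneg]

lemma dia_depth (φ : ModalForm) : (ModalForm.dia φ).depth = φ.depth + 1 := by
  simp [ModalForm.dia, ModalForm.depth]

lemma hall2 {P Q R S : Prop} (h1 : P ∨ R) (h2 : Q ∨ S) (h3 : P ∨ Q) (h4 : R ∨ S) :
    (P ∧ S) ∨ (Q ∧ R) := by tauto

lemma twoElem_cover {α : Type} {S : Set α} (h : TwoElem S) {a b : α}
    (ha : a ∈ S) (hb : b ∈ S) (hab : a ≠ b) : ∀ v ∈ S, v = a ∨ v = b := by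
  obtain ⟨c, d, hcd, rfl⟩ := h
  intro v hv
  simp only [Set.mem_insert_iff, Set.mem_singleton_iff] at ha hb hv
  rcases ha with rfl | rfl <;> rcases hb with rfl | rfl <;> rcases hv with rfl | rfl <;> tauto

lemma twoElem_pair {α : Type} {S : Set α} (h : TwoElem S) :
    ∃ g : Bool → α, g false ≠ g true ∧ (∀ i, g i ∈ S) ∧ ∀ v ∈ S, ∃ i, g i = v := by
  obtain ⟨c, d, hcd, rfl⟩ := h
  refine ⟨fun i => if i then d else c, by simpa using hcd, ?_, ?_⟩
  · intro i; cases i <;> simp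
  · intro v hv
    simp only [Set.mem_insert_iff, Set.mem_singleton_iff] at hv
    rcases hv with rfl | rfl
    · exact ⟨false, rfl⟩
    · exact ⟨true, rfl⟩

lemma twoElem_partner {α : Type} {S : Set α} (h : TwoElem S) {a : α} (ha : a ∈ S) :
    ∃ b, a ≠ b ∧ b ∈ S ∧ ∀ v ∈ S, v = a ∨ v = b := by
  obtain ⟨c, d, hcd, rfl⟩ := h
  simp only [Set.mem_insert_iff, Set.mem_singleton_iff] at ha
  rcases ha with rfl | rfl
  · exact ⟨d, hcd, by simp, by intro v hv; simpa using hv⟩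
  · refine ⟨c, fun h => hcd h.symm, by simp, ?_⟩
    intro v hv
    simp only [Set.mem_insert_iff, Set.mem_singleton_iff] at hv
    tauto

end IPAux
namespace IPAux

/-- Unpacked structure of a model in `C_LP221`. -/
structure LPData (M : KModel) where
  x : M.W
  j : ℕ
  C : Fin (j + 1) → Set M.W
  hx : ∀ k, x ∉ C k
  htwo : ∀ k, TwoElem (C k)
  hdisj : ∀ k l, k ≠ l → Disjoint (C k) (C l)
  hcov : ∀ w : M.W, w = x ∨ ∃ k, w ∈ C k
  hR : ∀ u v : M.W, M.R u v ↔ (u = v ∨ (∃ k, u ∈ C k ∧ v ∈ C k) ∨ u = x)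

lemma lpdata_of_mem {M : KModel} (h : M ∈ C_LP221) : Nonempty (LPData M) := by
  obtain ⟨_, x, j, C, h1, h2, h3, h4, h5⟩ := h
  exact ⟨⟨x, j, C, h1, h2, h3, h4, h5⟩⟩

namespace LPData

variable {M : KModel} (D : LPData M)

lemma R_root (v : M.W) : M.R D.x v := (D.hR _ _).mpr (Or.inr (Or.inr rfl))

lemma mem_unique {a : M.W} {k l : Fin (D.j + 1)} (hk : a ∈ D.C k) (hl : a ∈ D.C l) :
    k = l := by
  by_contra hne
  exact Set.disjoint_left.mp (D.hdisj k l hne) hk hl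

lemma R_cluster {a b : M.W} {k : Fin (D.j + 1)} (ha : a ∈ D.C k) (hb : b ∈ D.C k) :
    M.R a b := (D.hR _ _).mpr (Or.inr (Or.inl ⟨k, ha, hb⟩))

lemma R_cluster_iff {a : M.W} {k : Fin (D.j + 1)} (ha : a ∈ D.C k) (v : M.W) :
    M.R a v ↔ v ∈ D.C k := by
  constructor
  · intro h
    rcases (D.hR _ _).mp h with rfl | ⟨l, hal, hvl⟩ | rfl
    · exact ha
    · rwa [D.mem_unique ha hal]
    · exact absurd ha (D.hx k)
  · exact fun h => D.R_cluster ha h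

end LPData

/-- the "fan" frame: a root below `m+1` two-element clusters -/
def fanR (m : ℕ) : Option (Fin (m + 1) × Bool) → Option (Fin (m + 1) × Bool) → Prop
  | none, _ => True
  | some _, none => False
  | some a, some b => a.1 = b.1

def fanFrame (m : ℕ) : KFrame where
  W := Option (Fin (m + 1) × Bool)
  R := fanR m
  nonempty := ⟨none⟩
  refl := by intro x; cases x <;> simp [fanR]
  trans := by
    intro x y z hxy hyz
    cases x <;> cases y <;> cases z <;> simp_all [fanR]

lemma fan_some_ne (m : ℕ) (k : Fin (m+1)) :
    (some (k, false) : Option (Fin (m + 1) × Bool)) ≠ some (k, true) := by simp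

lemma fan_some_eq_iff (m : ℕ) (k l : Fin (m+1)) (i i' : Bool) :
    (some (k, i) : Option (Fin (m + 1) × Bool)) = some (l, i') ↔ k = l ∧ i = i' := by simp

lemma fan_mem (m : ℕ) (V : (fanFrame m).W → ℕ → Prop) :
    (fanFrame m).toModel V ∈ C_LP221 := by
  refine ⟨inferInstanceAs (Finite (Option (Fin (m+1) × Bool))), none, m,
    fun k => {some (k, false), some (k, true)}, ?_, ?_, ?_, ?_, ?_⟩
  · intro k
    rintro (h | h) <;> exact absurd h (by intro h'; cases h')
  · intro k
    exact ⟨some (k, false), some (k, true), fan_some_ne m k, rfl⟩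
  · intro k l hkl
    rw [Set.disjoint_left]
    rintro a (rfl | rfl) (h | h) <;>
      exact hkl ((fan_some_eq_iff m _ _ _ _).mp h).1
  · rintro (_ | ⟨k, i⟩)
    · exact Or.inl rfl
    · refine Or.inr ⟨k, ?_⟩
      cases i
      · exact Or.inl rfl
      · exact Or.inr rfl
  · rintro (_ | ⟨k, i⟩) (_ | ⟨l, i'⟩)
    · exact ⟨fun _ => Or.inl rfl, fun _ => trivial⟩
    · exact ⟨fun _ => Or.inr (Or.inr rfl), fun _ => trivial⟩
    · constructor
      · intro h; exact absurd h (by exact fun h => h)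
      · rintro (h | ⟨k', (h1 | h1), (h2 | h2)⟩ | h) <;>
          first
          | exact absurd h (by simp)
          | (rw [h2] at h; exact absurd h (by simp))
          | exact absurd h2 (by intro h'; cases h')
    · constructor
      · intro h
        have hk : k = l := h
        subst hk
        refine Or.inr (Or.inl ⟨k, ?_, ?_⟩)
        · cases i
          · exact Or.inl rfl
          · exact Or.inr rfl
        · cases i'
          · exact Or.inl rfl
          · exact Or.inr rfl
      · rintro (h | ⟨k', (h1 | h1), (h2 | h2)⟩ | h)
        · exact ((fan_some_eq_iff m _ _ _ _).mp h).1
        all_goals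
          first
          | exact absurd h (by simp)
          | (exact (((fan_some_eq_iff m _ _ _ _).mp h1).1).trans
              (((fan_some_eq_iff m _ _ _ _).mp h2).1).symm)

end IPAux
namespace IPAux

lemma master (Pp Pm : Finset ℕ) (M0 M1 : KModel) (m : ℕ)
    (r0 : M0.W) (r1 : M1.W)
    (u0 : Fin (m + 1) → Bool → M0.W) (u1 : Fin (m + 1) → Bool → M1.W)
    (h0a : ∀ k i i', M0.R (u0 k i) (u0 k i'))
    (h0b : ∀ k i w, M0.R (u0 k i) w → ∃ i', u0 k i' = w)
    (h0c : ∀ k i, M0.R r0 (u0 k i))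
    (h0d : ∀ v, M0.R r0 v → v = r0 ∨ ∃ k i, u0 k i = v)
    (h1a : ∀ k i i', M1.R (u1 k i) (u1 k i'))
    (h1b : ∀ k i w, M1.R (u1 k i) w → ∃ i', u1 k i' = w)
    (h1c : ∀ k i, M1.R r1 (u1 k i))
    (h1d : ∀ v, M1.R r1 v → v = r1 ∨ ∃ k i, u1 k i = v)
    (hle : ∀ k i, Cond Pp Pm M0 (u0 k i) M1 (u1 k i))
    (hle0 : Cond Pp Pm M0 r0 M1 r1) :
    ∃ (F : KFrame) (wstar : F.W) (f0 : F.W → M0.W) (f1 : F.W → M1.W),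
      (∀ V : F.W → ℕ → Prop, F.toModel V ∈ C_LP221) ∧
      PMorphism F M0.toKFrame f0 ∧
      PMorphism F M1.toKFrame f1 ∧
      f0 wstar = r0 ∧ f1 wstar = r1 ∧
      ∀ x : F.W, ModalArrow Pp Pm 0 M0 (f0 x) M1 (f1 x) := by
  refine ⟨fanFrame m, none,
    (fun z => match z with | none => r0 | some (k, i) => u0 k i),
    (fun z => match z with | none => r1 | some (k, i) => u1 k i),
    fan_mem m, ⟨?_, ?_⟩, ⟨?_, ?_⟩, rfl, rfl, ?_⟩
  · rintro (_ | ⟨k, i⟩) (_ | ⟨l, i'⟩) h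
    · exact M0.refl r0
    · exact h0c l i'
    · exact absurd h (fun h => h)
    · have hk : k = l := h
      subst hk
      exact h0a k i i'
  · rintro (_ | ⟨k, i⟩) w h
    · rcases h0d w h with rfl | ⟨k, i, rfl⟩
      · exact ⟨none, trivial, rfl⟩
      · exact ⟨some (k, i), trivial, rfl⟩
    · rcases h0b k i w h with ⟨i', rfl⟩
      exact ⟨some (k, i'), rfl, rfl⟩
  · rintro (_ | ⟨k, i⟩) (_ | ⟨l, i'⟩) h
    · exact M1.refl r1
    · exact h1c l i'
    · exact absurd h (fun h => h)
    · have hk : k = l := h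
      subst hk
      exact h1a k i i'
  · rintro (_ | ⟨k, i⟩) w h
    · rcases h1d w h with rfl | ⟨k, i, rfl⟩
      · exact ⟨none, trivial, rfl⟩
      · exact ⟨some (k, i), trivial, rfl⟩
    · rcases h1b k i w h with ⟨i', rfl⟩
      exact ⟨some (k, i'), rfl, rfl⟩
  · rintro (_ | ⟨k, i⟩)
    · exact (arrow0_iff Pp Pm M0 M1 r0 r1).mpr hle0
    · exact (arrow0_iff Pp Pm M0 M1 _ _).mpr (hle k i)

end IPAux
namespace IPAux

lemma arrow_mono {Pp Pm : Finset ℕ} {n : ℕ} {M0 M1 : KModel} {w0 : M0.W} {w1 : M1.W}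
    (h : ModalArrow Pp Pm n M0 w0 M1 w1) {n' : ℕ} (hn : n' ≤ n) :
    ModalArrow Pp Pm n' M0 w0 M1 w1 :=
  fun φ hp hm hd => h φ hp hm (le_trans hd hn)

lemma transfer_down {Pp Pm : Finset ℕ} {M0 M1 : KModel} {w0 : M0.W} {w1 : M1.W}
    (harr : ModalArrow Pp Pm 3 M0 w0 M1 w1) (φ : ModalForm)
    (h1 : φ.vpos ⊆ Pm) (h2 : φ.vneg ⊆ Pp) (h3 : φ.depth ≤ 3)
    (hs : M1.Sat w1 φ) : M0.Sat w0 φ := by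
  by_contra hn
  exact harr (.not φ) (by simpa [ModalForm.vpos]) (by simpa [ModalForm.vneg])
    (by simpa [ModalForm.depth]) hn hs

lemma orient_pair {W0 W1 : Type} (Le : W0 → W1 → Prop) (a a' : W0) (gb : Bool → W1)
    (h1 : Le a (gb false) ∨ Le a' (gb false))
    (h2 : Le a (gb true) ∨ Le a' (gb true))
    (h3 : Le a (gb false) ∨ Le a (gb true))
    (h4 : Le a' (gb false) ∨ Le a' (gb true)) :
    ∃ g1 : Bool → W1, (∀ i, ∃ i', g1 i = gb i') ∧
      (gb false ≠ gb true → g1 false ≠ g1 true) ∧ Le a (g1 false) ∧ Le a' (g1 true) := by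
  rcases hall2 h1 h2 h3 h4 with ⟨hP, hS⟩ | ⟨hQ, hR⟩
  · exact ⟨gb, fun i => ⟨i, rfl⟩, fun h => h, hP, hS⟩
  · refine ⟨fun i => gb (!i), fun i => ⟨!i, rfl⟩, ?_, hQ, hR⟩
    intro h hc
    exact h hc.symm

/-- Case-1 upward matching: every cluster of `M0` has a matching cluster of `M1`. -/
lemma case1_up (Pp Pm : Finset ℕ) (M0 M1 : KModel) (D0 : LPData M0) (D1 : LPData M1)
    (harr : ModalArrow Pp Pm 3 M0 D0.x M1 D1.x) (k : Fin (D0.j + 1)) :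
    ∃ (l : Fin (D1.j + 1)) (g0 : Bool → M0.W) (g1 : Bool → M1.W),
      (∀ i, g0 i ∈ D0.C k) ∧ g0 false ≠ g0 true ∧
      (∀ i, g1 i ∈ D1.C l) ∧ g1 false ≠ g1 true ∧
      ∀ i, Cond Pp Pm M0 (g0 i) M1 (g1 i) := by
  obtain ⟨ga, hane, hamem, hacov⟩ := twoElem_pair (D0.htwo k)
  set a := ga false with ha
  set a' := ga true with ha'
  set δa := charForm Pp Pm M0 a with hδa
  set δa' := charForm Pp Pm M0 a' with hδa'
  set φ : ModalForm :=
    .dia (.box (.and (.or δa δa') (.and (.dia δa) (.dia δa')))) with hφ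
  have hsat0 : M0.Sat D0.x φ := by
    rw [hφ, sat_dia]
    refine ⟨a, D0.R_root a, ?_⟩
    intro β hβ
    have hβk : β ∈ D0.C k := (D0.R_cluster_iff (hamem false) β).mp hβ
    refine ⟨?_, ?_, ?_⟩
    · rcases twoElem_cover (D0.htwo k) (hamem false) (hamem true) hane β hβk with rfl | rfl
      · exact Or.inl (charForm_self _ _ _ _)
      · exact Or.inr (charForm_self _ _ _ _)
    · rw [sat_dia]
      exact ⟨a, D0.R_cluster hβk (hamem false), charForm_self _ _ _ _⟩
    · rw [sat_dia]
      exact ⟨a', D0.R_cluster hβk (hamem true), charForm_self _ _ _ _⟩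
  have hsat1 : M1.Sat D1.x φ := by
    refine harr φ ?_ ?_ ?_ hsat0
    · simp [hφ, hδa, hδa', ModalForm.dia, ModalForm.vpos, ModalForm.vneg,
        Finset.union_subset_iff, charForm_vpos, charForm_vneg]
    · simp [hφ, hδa, hδa', ModalForm.dia, ModalForm.vpos, ModalForm.vneg,
        Finset.union_subset_iff, charForm_vpos, charForm_vneg]
    · simp [hφ, hδa, hδa', ModalForm.dia, ModalForm.depth, charForm_depth]
  rw [hφ, sat_dia] at hsat1
  obtain ⟨v, hv, hvsat⟩ := hsat1
  simp only [KModel.Sat, sat_dia, hδa, hδa', sat_charForm] at hvsat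
  -- find a cluster of M1 entirely visible from v
  obtain ⟨l, gb, hbne, hbmem, hbcov, hRb⟩ :
      ∃ (l : Fin (D1.j + 1)) (gb : Bool → M1.W), gb false ≠ gb true ∧
        (∀ i, gb i ∈ D1.C l) ∧ (∀ w ∈ D1.C l, ∃ i, gb i = w) ∧ ∀ i, M1.R v (gb i) := by
    rcases D1.hcov v with rfl | ⟨l, hvl⟩
    · obtain ⟨gb, h1, h2, h3⟩ := twoElem_pair (D1.htwo 0)
      exact ⟨0, gb, h1, h2, h3, fun i => D1.R_root _⟩
    · obtain ⟨gb, h1, h2, h3⟩ := twoElem_pair (D1.htwo l)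
      exact ⟨l, gb, h1, h2, h3, fun i => D1.R_cluster hvl (h2 i)⟩
  have hcl : ∀ γ, M1.R (gb false) γ → ∃ i, gb i = γ := by
    intro γ hγ
    exact hbcov γ ((D1.R_cluster_iff (hbmem false) γ).mp hγ)
  have hcl' : ∀ γ, M1.R (gb true) γ → ∃ i, gb i = γ := by
    intro γ hγ
    exact hbcov γ ((D1.R_cluster_iff (hbmem true) γ).mp hγ)
  obtain ⟨hor1, hdia1, hdia1'⟩ := hvsat (gb false) (hRb false)
  obtain ⟨hor2, _, _⟩ := hvsat (gb true) (hRb true)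
  have h3 : Cond Pp Pm M0 a M1 (gb false) ∨ Cond Pp Pm M0 a M1 (gb true) := by
    obtain ⟨γ, hγ, hc⟩ := hdia1
    obtain ⟨i, rfl⟩ := hcl γ hγ
    cases i
    · exact Or.inl hc
    · exact Or.inr hc
  have h4 : Cond Pp Pm M0 a' M1 (gb false) ∨ Cond Pp Pm M0 a' M1 (gb true) := by
    obtain ⟨γ, hγ, hc⟩ := hdia1'
    obtain ⟨i, rfl⟩ := hcl γ hγ
    cases i
    · exact Or.inl hc
    · exact Or.inr hc
  obtain ⟨g1, hrange, hne1, hc1, hc2⟩ :=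
    orient_pair (fun u v => Cond Pp Pm M0 u M1 v) a a' gb hor1 hor2 h3 h4
  refine ⟨l, ga, g1, hamem, hane, ?_, hne1 hbne, ?_⟩
  · intro i
    obtain ⟨i', hi'⟩ := hrange i
    rw [hi']
    exact hbmem i'
  · intro i
    cases i
    · exact hc1
    · exact hc2

end IPAux
namespace IPAux

lemma cond_flip {Pp Pm : Finset ℕ} {M N : KModel} {u : M.W} {v : N.W} :
    Cond Pm Pp N v M u → Cond Pp Pm M u N v := fun h => ⟨h.2, h.1⟩

/-- Case-1 downward matching: every cluster of `M1` has a matching cluster of `M0`. -/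
lemma case1_down (Pp Pm : Finset ℕ) (M0 M1 : KModel) (D0 : LPData M0) (D1 : LPData M1)
    (harr : ModalArrow Pp Pm 3 M0 D0.x M1 D1.x) (l : Fin (D1.j + 1)) :
    ∃ (k : Fin (D0.j + 1)) (g0 : Bool → M0.W) (g1 : Bool → M1.W),
      (∀ i, g0 i ∈ D0.C k) ∧ g0 false ≠ g0 true ∧
      (∀ i, g1 i ∈ D1.C l) ∧ g1 false ≠ g1 true ∧
      ∀ i, Cond Pp Pm M0 (g0 i) M1 (g1 i) := by
  obtain ⟨gb, hbne, hbmem, hbcov⟩ := twoElem_pair (D1.htwo l)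
  set b := gb false with hb
  set b' := gb true with hb'
  set δb := charForm Pm Pp M1 b with hδb
  set δb' := charForm Pm Pp M1 b' with hδb'
  set φ : ModalForm :=
    .dia (.box (.and (.or δb δb') (.and (.dia δb) (.dia δb')))) with hφ
  have hsat1 : M1.Sat D1.x φ := by
    rw [hφ, sat_dia]
    refine ⟨b, D1.R_root b, ?_⟩
    intro β hβ
    have hβl : β ∈ D1.C l := (D1.R_cluster_iff (hbmem false) β).mp hβ
    refine ⟨?_, ?_, ?_⟩
    · rcases twoElem_cover (D1.htwo l) (hbmem false) (hbmem true) hbne β hβl with rfl | rfl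
      · exact Or.inl (charForm_self _ _ _ _)
      · exact Or.inr (charForm_self _ _ _ _)
    · rw [sat_dia]
      exact ⟨b, D1.R_cluster hβl (hbmem false), charForm_self _ _ _ _⟩
    · rw [sat_dia]
      exact ⟨b', D1.R_cluster hβl (hbmem true), charForm_self _ _ _ _⟩
  have hsat0 : M0.Sat D0.x φ := by
    refine transfer_down harr φ ?_ ?_ ?_ hsat1
    · simp [hφ, hδb, hδb', ModalForm.dia, ModalForm.vpos, ModalForm.vneg,
        Finset.union_subset_iff, charForm_vpos, charForm_vneg]
    · simp [hφ, hδb, hδb', ModalForm.dia, ModalForm.vpos, ModalForm.vneg,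
        Finset.union_subset_iff, charForm_vpos, charForm_vneg]
    · simp [hφ, hδb, hδb', ModalForm.dia, ModalForm.depth, charForm_depth]
  rw [hφ, sat_dia] at hsat0
  obtain ⟨u, hu, husat⟩ := hsat0
  simp only [KModel.Sat, sat_dia, hδb, hδb', sat_charForm] at husat
  obtain ⟨k, ga, hane, hamem, hacov, hRa⟩ :
      ∃ (k : Fin (D0.j + 1)) (ga : Bool → M0.W), ga false ≠ ga true ∧
        (∀ i, ga i ∈ D0.C k) ∧ (∀ w ∈ D0.C k, ∃ i, ga i = w) ∧ ∀ i, M0.R u (ga i) := by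
    rcases D0.hcov u with rfl | ⟨k, hul⟩
    · obtain ⟨ga, h1, h2, h3⟩ := twoElem_pair (D0.htwo 0)
      exact ⟨0, ga, h1, h2, h3, fun i => D0.R_root _⟩
    · obtain ⟨ga, h1, h2, h3⟩ := twoElem_pair (D0.htwo k)
      exact ⟨k, ga, h1, h2, h3, fun i => D0.R_cluster hul (h2 i)⟩
  have hcl : ∀ γ, M0.R (ga false) γ → ∃ i, ga i = γ := fun γ hγ =>
    hacov γ ((D0.R_cluster_iff (hamem false) γ).mp hγ)
  obtain ⟨hor1, hdia1, hdia1'⟩ := husat (ga false) (hRa false)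
  obtain ⟨hor2, _, _⟩ := husat (ga true) (hRa true)
  replace hor1 := hor1.imp cond_flip cond_flip
  replace hor2 := hor2.imp cond_flip cond_flip
  have h3 : Cond Pp Pm M0 (ga false) M1 b ∨ Cond Pp Pm M0 (ga true) M1 b := by
    obtain ⟨γ, hγ, hc⟩ := hdia1
    replace hc := cond_flip hc
    obtain ⟨i, rfl⟩ := hcl γ hγ
    cases i
    · exact Or.inl hc
    · exact Or.inr hc
  have h4 : Cond Pp Pm M0 (ga false) M1 b' ∨ Cond Pp Pm M0 (ga true) M1 b' := by
    obtain ⟨γ, hγ, hc⟩ := hdia1'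
    replace hc := cond_flip hc
    obtain ⟨i, rfl⟩ := hcl γ hγ
    cases i
    · exact Or.inl hc
    · exact Or.inr hc
  obtain ⟨g0, hrange, hne0, hc1, hc2⟩ :=
    orient_pair (fun v u => Cond Pp Pm M0 u M1 v) b b' ga hor1 hor2 h3 h4
  refine ⟨k, g0, gb, ?_, hne0 hane, hbmem, hbne, ?_⟩
  · intro i
    obtain ⟨i', hi'⟩ := hrange i
    rw [hi']
    exact hamem i'
  · intro i
    cases i
    · exact hc1
    · exact hc2

end IPAux
namespace IPAux

/-- Facts available when the source world `w0` lies in a two-element cluster. -/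
lemma final_src_facts (Pp Pm : Finset ℕ) (M0 M1 : KModel) (D0 : LPData M0)
    {w0 : M0.W} {w1 : M1.W} (harr : ModalArrow Pp Pm 3 M0 w0 M1 w1)
    {k0 : Fin (D0.j + 1)} (hw0 : w0 ∈ D0.C k0) {a' : M0.W} (ha' : a' ∈ D0.C k0)
    (hcov : ∀ v ∈ D0.C k0, v = w0 ∨ v = a') :
    (∀ v, M1.R w1 v → (Cond Pp Pm M0 w0 M1 v ∨ Cond Pp Pm M0 a' M1 v)) ∧
    (∃ v, M1.R w1 v ∧ Cond Pp Pm M0 a' M1 v) ∧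
    (∀ β, M1.R w1 β → ∃ γ, M1.R β γ ∧ Cond Pp Pm M0 w0 M1 γ) ∧
    (∀ β, M1.R w1 β → ∃ γ, M1.R β γ ∧ Cond Pp Pm M0 a' M1 γ) := by
  set δa := charForm Pp Pm M0 w0 with hδa
  set δa' := charForm Pp Pm M0 a' with hδa'
  refine ⟨?_, ?_, ?_, ?_⟩
  · have hsat0 : M0.Sat w0 (.box (.or δa δa')) := by
      intro y hy
      rcases hcov y ((D0.R_cluster_iff hw0 y).mp hy) with rfl | rfl
      · exact Or.inl (charForm_self _ _ _ _)
      · exact Or.inr (charForm_self _ _ _ _)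
    have hsat1 := harr (.box (.or δa δa'))
      (by simp [hδa, hδa', ModalForm.vpos, Finset.union_subset_iff, charForm_vpos])
      (by simp [hδa, hδa', ModalForm.vneg, Finset.union_subset_iff, charForm_vneg])
      (by simp [hδa, hδa', ModalForm.depth, charForm_depth]) hsat0
    intro v hv
    have := hsat1 v hv
    simpa only [KModel.Sat, hδa, hδa', sat_charForm] using this
  · have hsat0 : M0.Sat w0 (.dia δa') := by
      rw [sat_dia]
      exact ⟨a', D0.R_cluster hw0 ha', charForm_self _ _ _ _⟩
    have hsat1 := harr (.dia δa')
      (by simp [hδa', ModalForm.dia, ModalForm.vpos, ModalForm.vneg, charForm_vpos,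
          charForm_vneg])
      (by simp [hδa', ModalForm.dia, ModalForm.vpos, ModalForm.vneg, charForm_vpos,
          charForm_vneg])
      (by simp [hδa', ModalForm.dia, ModalForm.depth, charForm_depth]) hsat0
    rw [sat_dia] at hsat1
    obtain ⟨v, hv, hc⟩ := hsat1
    exact ⟨v, hv, by rwa [hδa', sat_charForm] at hc⟩
  · have hsat0 : M0.Sat w0 (.box (.dia δa)) := by
      intro y hy
      rw [sat_dia]
      exact ⟨w0, D0.R_cluster ((D0.R_cluster_iff hw0 y).mp hy) hw0, charForm_self _ _ _ _⟩
    have hsat1 := harr (.box (.dia δa))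
      (by simp [hδa, ModalForm.dia, ModalForm.vpos, ModalForm.vneg, charForm_vpos,
          charForm_vneg])
      (by simp [hδa, ModalForm.dia, ModalForm.vpos, ModalForm.vneg, charForm_vpos,
          charForm_vneg])
      (by simp [hδa, ModalForm.dia, ModalForm.depth, charForm_depth]) hsat0
    intro β hβ
    have := hsat1 β hβ
    rw [sat_dia] at this
    obtain ⟨γ, hγ, hc⟩ := this
    exact ⟨γ, hγ, by rwa [hδa, sat_charForm] at hc⟩
  · have hsat0 : M0.Sat w0 (.box (.dia δa')) := by
      intro y hy
      rw [sat_dia]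
      exact ⟨a', D0.R_cluster ((D0.R_cluster_iff hw0 y).mp hy) ha', charForm_self _ _ _ _⟩
    have hsat1 := harr (.box (.dia δa'))
      (by simp [hδa', ModalForm.dia, ModalForm.vpos, ModalForm.vneg, charForm_vpos,
          charForm_vneg])
      (by simp [hδa', ModalForm.dia, ModalForm.vpos, ModalForm.vneg, charForm_vpos,
          charForm_vneg])
      (by simp [hδa', ModalForm.dia, ModalForm.depth, charForm_depth]) hsat0
    intro β hβ
    have := hsat1 β hβ
    rw [sat_dia] at this
    obtain ⟨γ, hγ, hc⟩ := this
    exact ⟨γ, hγ, by rwa [hδa', sat_charForm] at hc⟩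

/-- Facts available when the target world `w1` lies in a two-element cluster. -/
lemma final_tgt_facts (Pp Pm : Finset ℕ) (M0 M1 : KModel) (D1 : LPData M1)
    {w0 : M0.W} {w1 : M1.W} (harr : ModalArrow Pp Pm 3 M0 w0 M1 w1)
    {l0 : Fin (D1.j + 1)} (hw1 : w1 ∈ D1.C l0) {b' : M1.W} (hb' : b' ∈ D1.C l0)
    (hcov : ∀ v ∈ D1.C l0, v = w1 ∨ v = b') :
    (∀ u, M0.R w0 u → (Cond Pp Pm M0 u M1 w1 ∨ Cond Pp Pm M0 u M1 b')) ∧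
    (∀ α, M0.R w0 α → ∃ γ, M0.R α γ ∧ Cond Pp Pm M0 γ M1 w1) ∧
    (∀ α, M0.R w0 α → ∃ γ, M0.R α γ ∧ Cond Pp Pm M0 γ M1 b') := by
  set δb := charForm Pm Pp M1 w1 with hδb
  set δb' := charForm Pm Pp M1 b' with hδb'
  refine ⟨?_, ?_, ?_⟩
  · have hsat1 : M1.Sat w1 (.box (.or δb δb')) := by
      intro y hy
      rcases hcov y ((D1.R_cluster_iff hw1 y).mp hy) with rfl | rfl
      · exact Or.inl (charForm_self _ _ _ _)
      · exact Or.inr (charForm_self _ _ _ _)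
    have hsat0 := transfer_down harr (.box (.or δb δb'))
      (by simp [hδb, hδb', ModalForm.vpos, Finset.union_subset_iff, charForm_vpos])
      (by simp [hδb, hδb', ModalForm.vneg, Finset.union_subset_iff, charForm_vneg])
      (by simp [hδb, hδb', ModalForm.depth, charForm_depth]) hsat1
    intro u hu
    have := hsat0 u hu
    simp only [KModel.Sat, hδb, hδb', sat_charForm] at this
    exact this.imp cond_flip cond_flip
  · have hsat1 : M1.Sat w1 (.box (.dia δb)) := by
      intro y hy
      rw [sat_dia]
      exact ⟨w1, D1.R_cluster ((D1.R_cluster_iff hw1 y).mp hy) hw1, charForm_self _ _ _ _⟩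
    have hsat0 := transfer_down harr (.box (.dia δb))
      (by simp [hδb, ModalForm.dia, ModalForm.vpos, ModalForm.vneg, charForm_vpos,
          charForm_vneg])
      (by simp [hδb, ModalForm.dia, ModalForm.vpos, ModalForm.vneg, charForm_vpos,
          charForm_vneg])
      (by simp [hδb, ModalForm.dia, ModalForm.depth, charForm_depth]) hsat1
    intro α hα
    have := hsat0 α hα
    rw [sat_dia] at this
    obtain ⟨γ, hγ, hc⟩ := this
    rw [hδb, sat_charForm] at hc
    exact ⟨γ, hγ, cond_flip hc⟩
  · have hsat1 : M1.Sat w1 (.box (.dia δb')) := by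
      intro y hy
      rw [sat_dia]
      exact ⟨b', D1.R_cluster ((D1.R_cluster_iff hw1 y).mp hy) hb', charForm_self _ _ _ _⟩
    have hsat0 := transfer_down harr (.box (.dia δb'))
      (by simp [hδb', ModalForm.dia, ModalForm.vpos, ModalForm.vneg, charForm_vpos,
          charForm_vneg])
      (by simp [hδb', ModalForm.dia, ModalForm.vpos, ModalForm.vneg, charForm_vpos,
          charForm_vneg])
      (by simp [hδb', ModalForm.dia, ModalForm.depth, charForm_depth]) hsat1
    intro α hα
    have := hsat0 α hα
    rw [sat_dia] at this
    obtain ⟨γ, hγ, hc⟩ := this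
    rw [hδb', sat_charForm] at hc
    exact ⟨γ, hγ, cond_flip hc⟩

end IPAux
theorem stmt16 : EnjoysIP C_LP221 3 := by
  intro Pp Pm M0 M1 hM0 hM1 w0 w1 harr
  obtain ⟨D0⟩ := IPAux.lpdata_of_mem hM0
  obtain ⟨D1⟩ := IPAux.lpdata_of_mem hM1
  have hle0 : IPAux.Cond Pp Pm M0 w0 M1 w1 :=
    (IPAux.arrow0_iff Pp Pm M0 M1 w0 w1).mp (IPAux.arrow_mono harr (by norm_num))
  rcases D0.hcov w0 with hw0x | ⟨k0, hw0k⟩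
  · rcases D1.hcov w1 with hw1x | ⟨l0, hw1l⟩
    · -- Case 1 : both worlds are the respective roots
      subst hw0x; subst hw1x
      choose lup g0up g1up hu1 hu2 hu3 hu4 hu5 using
        fun k => IPAux.case1_up Pp Pm M0 M1 D0 D1 harr k
      choose kdn g0dn g1dn hd1 hd2 hd3 hd4 hd5 using
        fun l => IPAux.case1_down Pp Pm M0 M1 D0 D1 harr l
      refine IPAux.master Pp Pm M0 M1 (D0.j + D1.j + 1) D0.x D1.x
        (fun k => if h : (k : ℕ) < D0.j + 1 then g0up ⟨(k : ℕ), h⟩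
          else g0dn ⟨(k : ℕ) - (D0.j + 1), by have := k.isLt; omega⟩)
        (fun k => if h : (k : ℕ) < D0.j + 1 then g1up ⟨(k : ℕ), h⟩
          else g1dn ⟨(k : ℕ) - (D0.j + 1), by have := k.isLt; omega⟩)
        ?_ ?_ ?_ ?_ ?_ ?_ ?_ ?_ ?_ hle0
      · intro k i i'
        by_cases h : (k : ℕ) < D0.j + 1
        · simp only [dif_pos h]
          exact D0.R_cluster (hu1 _ i) (hu1 _ i')
        · simp only [dif_neg h]
          exact D0.R_cluster (hd1 _ i) (hd1 _ i')
      · intro k i w hw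
        by_cases h : (k : ℕ) < D0.j + 1
        · simp only [dif_pos h] at hw ⊢
          rcases IPAux.twoElem_cover (D0.htwo _) (hu1 _ false) (hu1 _ true) (hu2 _) w
            ((D0.R_cluster_iff (hu1 _ i) w).mp hw) with rfl | rfl
          · exact ⟨false, rfl⟩
          · exact ⟨true, rfl⟩
        · simp only [dif_neg h] at hw ⊢
          rcases IPAux.twoElem_cover (D0.htwo _) (hd1 _ false) (hd1 _ true) (hd2 _) w
            ((D0.R_cluster_iff (hd1 _ i) w).mp hw) with rfl | rfl
          · exact ⟨false, rfl⟩
          · exact ⟨true, rfl⟩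
      · intro k i
        exact D0.R_root _
      · intro v hv
        rcases D0.hcov v with rfl | ⟨kk, hvk⟩
        · exact Or.inl rfl
        · refine Or.inr ⟨⟨(kk : ℕ), by have := kk.isLt; omega⟩, ?_⟩
          have hlt : ((⟨(kk : ℕ), by have := kk.isLt; omega⟩ : Fin (D0.j + D1.j + 1 + 1)) : ℕ)
              < D0.j + 1 := kk.isLt
          simp only [dif_pos hlt]
          rcases IPAux.twoElem_cover (D0.htwo kk) (hu1 kk false) (hu1 kk true) (hu2 kk) v hvk
            with rfl | rfl
          · exact ⟨false, rfl⟩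
          · exact ⟨true, rfl⟩
      · intro k i i'
        by_cases h : (k : ℕ) < D0.j + 1
        · simp only [dif_pos h]
          exact D1.R_cluster (hu3 _ i) (hu3 _ i')
        · simp only [dif_neg h]
          exact D1.R_cluster (hd3 _ i) (hd3 _ i')
      · intro k i w hw
        by_cases h : (k : ℕ) < D0.j + 1
        · simp only [dif_pos h] at hw ⊢
          rcases IPAux.twoElem_cover (D1.htwo _) (hu3 _ false) (hu3 _ true) (hu4 _) w
            ((D1.R_cluster_iff (hu3 _ i) w).mp hw) with rfl | rfl
          · exact ⟨false, rfl⟩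
          · exact ⟨true, rfl⟩
        · simp only [dif_neg h] at hw ⊢
          rcases IPAux.twoElem_cover (D1.htwo _) (hd3 _ false) (hd3 _ true) (hd4 _) w
            ((D1.R_cluster_iff (hd3 _ i) w).mp hw) with rfl | rfl
          · exact ⟨false, rfl⟩
          · exact ⟨true, rfl⟩
      · intro k i
        exact D1.R_root _
      · intro v hv
        rcases D1.hcov v with rfl | ⟨ll, hvl⟩
        · exact Or.inl rfl
        · refine Or.inr ⟨⟨D0.j + 1 + (ll : ℕ), by have := ll.isLt; omega⟩, ?_⟩
          have hnlt : ¬ ((⟨D0.j + 1 + (ll : ℕ), by have := ll.isLt; omega⟩ :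
              Fin (D0.j + D1.j + 1 + 1)) : ℕ) < D0.j + 1 := by simp; omega
          simp only [dif_neg hnlt]
          have hidx : (⟨((⟨D0.j + 1 + (ll : ℕ), by have := ll.isLt; omega⟩ :
              Fin (D0.j + D1.j + 1 + 1)) : ℕ) - (D0.j + 1), by have := ll.isLt; omega⟩ :
              Fin (D1.j + 1)) = ll := by
            apply Fin.ext
            simp
          rw [hidx]
          rcases IPAux.twoElem_cover (D1.htwo ll) (hd3 ll false) (hd3 ll true) (hd4 ll) v hvl
            with rfl | rfl
          · exact ⟨false, rfl⟩
          · exact ⟨true, rfl⟩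
      · intro k i
        by_cases h : (k : ℕ) < D0.j + 1
        · simp only [dif_pos h]
          exact hu5 _ i
        · simp only [dif_neg h]
          exact hd5 _ i
    · -- Case 3 : source root, target in a cluster
      subst hw0x
      obtain ⟨b', hbne', hb'mem, hcovB⟩ := IPAux.twoElem_partner (D1.htwo l0) hw1l
      obtain ⟨hA, hC, hD⟩ :=
        IPAux.final_tgt_facts Pp Pm M0 M1 D1 harr hw1l hb'mem hcovB
      have main : ∀ k : Fin (D0.j + 1), ∃ g0 : Bool → M0.W,
          (∀ i, g0 i ∈ D0.C k) ∧ g0 false ≠ g0 true ∧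
          IPAux.Cond Pp Pm M0 (g0 false) M1 w1 ∧ IPAux.Cond Pp Pm M0 (g0 true) M1 b' := by
        intro k
        obtain ⟨ga, hane, hamem, hacov⟩ := IPAux.twoElem_pair (D0.htwo k)
        have h1 := hA (ga false) (D0.R_root _)
        have h2 := hA (ga true) (D0.R_root _)
        have h3 : IPAux.Cond Pp Pm M0 (ga false) M1 w1 ∨
            IPAux.Cond Pp Pm M0 (ga true) M1 w1 := by
          obtain ⟨γ, hγ, hc⟩ := hC (ga false) (D0.R_root _)
          obtain ⟨i, rfl⟩ := hacov γ ((D0.R_cluster_iff (hamem false) γ).mp hγ)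
          cases i
          · exact Or.inl hc
          · exact Or.inr hc
        have h4 : IPAux.Cond Pp Pm M0 (ga false) M1 b' ∨
            IPAux.Cond Pp Pm M0 (ga true) M1 b' := by
          obtain ⟨γ, hγ, hc⟩ := hD (ga false) (D0.R_root _)
          obtain ⟨i, rfl⟩ := hacov γ ((D0.R_cluster_iff (hamem false) γ).mp hγ)
          cases i
          · exact Or.inl hc
          · exact Or.inr hc
        obtain ⟨g0, hrange, hne0, hc1, hc2⟩ :=
          IPAux.orient_pair (fun v u => IPAux.Cond Pp Pm M0 u M1 v) w1 b' ga h1 h2 h3 h4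
        refine ⟨g0, ?_, hne0 hane, hc1, hc2⟩
        intro i
        obtain ⟨i', hi'⟩ := hrange i
        rw [hi']
        exact hamem i'
      choose g0 hmem0 hne0 hc1 hc2 using main
      have hmemB : ∀ i : Bool, (cond i b' w1) ∈ D1.C l0 := by
        intro i
        cases i
        · exact hw1l
        · exact hb'mem
      refine IPAux.master Pp Pm M0 M1 D0.j D0.x w1 g0 (fun _ i => cond i b' w1)
        ?_ ?_ ?_ ?_ ?_ ?_ ?_ ?_ ?_ hle0
      · intro k i i'
        exact D0.R_cluster (hmem0 k i) (hmem0 k i')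
      · intro k i w hw
        rcases IPAux.twoElem_cover (D0.htwo k) (hmem0 k false) (hmem0 k true) (hne0 k) w
          ((D0.R_cluster_iff (hmem0 k i) w).mp hw) with rfl | rfl
        · exact ⟨false, rfl⟩
        · exact ⟨true, rfl⟩
      · intro k i
        exact D0.R_root _
      · intro v hv
        rcases D0.hcov v with rfl | ⟨kk, hvk⟩
        · exact Or.inl rfl
        · refine Or.inr ⟨kk, ?_⟩
          rcases IPAux.twoElem_cover (D0.htwo kk) (hmem0 kk false) (hmem0 kk true) (hne0 kk)
            v hvk with rfl | rfl
          · exact ⟨false, rfl⟩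
          · exact ⟨true, rfl⟩
      · intro k i i'
        exact D1.R_cluster (hmemB i) (hmemB i')
      · intro k i w hw
        rcases hcovB w ((D1.R_cluster_iff (hmemB i) w).mp hw) with rfl | rfl
        · exact ⟨false, rfl⟩
        · exact ⟨true, rfl⟩
      · intro k i
        exact D1.R_cluster hw1l (hmemB i)
      · intro v hv
        rcases hcovB v ((D1.R_cluster_iff hw1l v).mp hv) with rfl | rfl
        · exact Or.inl rfl
        · exact Or.inr ⟨0, true, rfl⟩
      · intro k i
        cases i
        · exact hc1 k
        · exact hc2 k
  · rcases D1.hcov w1 with hw1x | ⟨l0, hw1l⟩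
    · -- Case 2b : source in a cluster, target root
      subst hw1x
      obtain ⟨a', hane', ha'mem, hcovA⟩ := IPAux.twoElem_partner (D0.htwo k0) hw0k
      obtain ⟨hA, _, hC, hD⟩ :=
        IPAux.final_src_facts Pp Pm M0 M1 D0 harr hw0k ha'mem hcovA
      have main : ∀ l : Fin (D1.j + 1), ∃ g1 : Bool → M1.W,
          (∀ i, g1 i ∈ D1.C l) ∧ g1 false ≠ g1 true ∧
          IPAux.Cond Pp Pm M0 w0 M1 (g1 false) ∧ IPAux.Cond Pp Pm M0 a' M1 (g1 true) := by
        intro l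
        obtain ⟨gb, hbne, hbmem, hbcov⟩ := IPAux.twoElem_pair (D1.htwo l)
        have h1 := hA (gb false) (D1.R_root _)
        have h2 := hA (gb true) (D1.R_root _)
        have h3 : IPAux.Cond Pp Pm M0 w0 M1 (gb false) ∨
            IPAux.Cond Pp Pm M0 w0 M1 (gb true) := by
          obtain ⟨γ, hγ, hc⟩ := hC (gb false) (D1.R_root _)
          obtain ⟨i, rfl⟩ := hbcov γ ((D1.R_cluster_iff (hbmem false) γ).mp hγ)
          cases i
          · exact Or.inl hc
          · exact Or.inr hc
        have h4 : IPAux.Cond Pp Pm M0 a' M1 (gb false) ∨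
            IPAux.Cond Pp Pm M0 a' M1 (gb true) := by
          obtain ⟨γ, hγ, hc⟩ := hD (gb false) (D1.R_root _)
          obtain ⟨i, rfl⟩ := hbcov γ ((D1.R_cluster_iff (hbmem false) γ).mp hγ)
          cases i
          · exact Or.inl hc
          · exact Or.inr hc
        obtain ⟨g1, hrange, hne1, hc1, hc2⟩ :=
          IPAux.orient_pair (fun u v => IPAux.Cond Pp Pm M0 u M1 v) w0 a' gb h1 h2 h3 h4
        refine ⟨g1, ?_, hne1 hbne, hc1, hc2⟩
        intro i
        obtain ⟨i', hi'⟩ := hrange i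
        rw [hi']
        exact hbmem i'
      choose g1 hmem1 hne1 hc1 hc2 using main
      have hmemA : ∀ i : Bool, (cond i a' w0) ∈ D0.C k0 := by
        intro i
        cases i
        · exact hw0k
        · exact ha'mem
      refine IPAux.master Pp Pm M0 M1 D1.j w0 D1.x (fun _ i => cond i a' w0) g1
        ?_ ?_ ?_ ?_ ?_ ?_ ?_ ?_ ?_ hle0
      · intro k i i'
        exact D0.R_cluster (hmemA i) (hmemA i')
      · intro k i w hw
        rcases hcovA w ((D0.R_cluster_iff (hmemA i) w).mp hw) with rfl | rfl
        · exact ⟨false, rfl⟩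
        · exact ⟨true, rfl⟩
      · intro k i
        exact D0.R_cluster hw0k (hmemA i)
      · intro v hv
        rcases hcovA v ((D0.R_cluster_iff hw0k v).mp hv) with rfl | rfl
        · exact Or.inl rfl
        · exact Or.inr ⟨0, true, rfl⟩
      · intro k i i'
        exact D1.R_cluster (hmem1 k i) (hmem1 k i')
      · intro k i w hw
        rcases IPAux.twoElem_cover (D1.htwo k) (hmem1 k false) (hmem1 k true) (hne1 k) w
          ((D1.R_cluster_iff (hmem1 k i) w).mp hw) with rfl | rfl
        · exact ⟨false, rfl⟩
        · exact ⟨true, rfl⟩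
      · intro k i
        exact D1.R_root _
      · intro v hv
        rcases D1.hcov v with rfl | ⟨ll, hvl⟩
        · exact Or.inl rfl
        · refine Or.inr ⟨ll, ?_⟩
          rcases IPAux.twoElem_cover (D1.htwo ll) (hmem1 ll false) (hmem1 ll true) (hne1 ll)
            v hvl with rfl | rfl
          · exact ⟨false, rfl⟩
          · exact ⟨true, rfl⟩
      · intro k i
        cases i
        · exact hc1 k
        · exact hc2 k
    · -- Case 2a : both worlds in clusters
      obtain ⟨a', hane', ha'mem, hcovA⟩ := IPAux.twoElem_partner (D0.htwo k0) hw0k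
      obtain ⟨b', hbne', hb'mem, hcovB⟩ := IPAux.twoElem_partner (D1.htwo l0) hw1l
      obtain ⟨hA, hB, _, _⟩ :=
        IPAux.final_src_facts Pp Pm M0 M1 D0 harr hw0k ha'mem hcovA
      have hmemA : ∀ i : Bool, (cond i a' w0) ∈ D0.C k0 := by
        intro i
        cases i
        · exact hw0k
        · exact ha'mem
      have hmemB : ∀ i : Bool, (cond i b' w1) ∈ D1.C l0 := by
        intro i
        cases i
        · exact hw1l
        · exact hb'mem
      have h1 := hA w1 (M1.refl w1)
      have h2 := hA b' (D1.R_cluster hw1l hb'mem)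
      have h3 : IPAux.Cond Pp Pm M0 w0 M1 w1 ∨ IPAux.Cond Pp Pm M0 w0 M1 b' := Or.inl hle0
      have h4 : IPAux.Cond Pp Pm M0 a' M1 w1 ∨ IPAux.Cond Pp Pm M0 a' M1 b' := by
        obtain ⟨v, hv, hc⟩ := hB
        rcases hcovB v ((D1.R_cluster_iff hw1l v).mp hv) with rfl | rfl
        · exact Or.inl hc
        · exact Or.inr hc
      obtain ⟨g1, hrange, hne1, hc1, hc2⟩ :=
        IPAux.orient_pair (fun u v => IPAux.Cond Pp Pm M0 u M1 v) w0 a'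
          (fun i => cond i b' w1) h1 h2 h3 h4
      have hmem1 : ∀ i, g1 i ∈ D1.C l0 := by
        intro i
        obtain ⟨i', hi'⟩ := hrange i
        rw [hi']
        exact hmemB i'
      have hne1' : g1 false ≠ g1 true := hne1 (by simpa using hbne')
      refine IPAux.master Pp Pm M0 M1 0 w0 w1 (fun _ i => cond i a' w0) (fun _ => g1)
        ?_ ?_ ?_ ?_ ?_ ?_ ?_ ?_ ?_ hle0
      · intro k i i'
        exact D0.R_cluster (hmemA i) (hmemA i')
      · intro k i w hw
        rcases hcovA w ((D0.R_cluster_iff (hmemA i) w).mp hw) with rfl | rfl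
        · exact ⟨false, rfl⟩
        · exact ⟨true, rfl⟩
      · intro k i
        exact D0.R_cluster hw0k (hmemA i)
      · intro v hv
        rcases hcovA v ((D0.R_cluster_iff hw0k v).mp hv) with rfl | rfl
        · exact Or.inl rfl
        · exact Or.inr ⟨0, true, rfl⟩
      · intro k i i'
        exact D1.R_cluster (hmem1 i) (hmem1 i')
      · intro k i w hw
        rcases IPAux.twoElem_cover (D1.htwo l0) (hmem1 false) (hmem1 true) hne1' w
          ((D1.R_cluster_iff (hmem1 i) w).mp hw) with rfl | rfl
        · exact ⟨false, rfl⟩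
        · exact ⟨true, rfl⟩
      · intro k i
        exact D1.R_cluster hw1l (hmem1 i)
      · intro v hv
        rcases IPAux.twoElem_cover (D1.htwo l0) (hmem1 false) (hmem1 true) hne1' v
          ((D1.R_cluster_iff hw1l v).mp hv) with rfl | rfl
        · exact Or.inr ⟨0, false, rfl⟩
        · exact Or.inr ⟨0, true, rfl⟩
      · intro k i
        cases i
        · exact hc1
        · exact hc2
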